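/- In the arc gadget of Lemma 7.14: let M ≥ 2, S ⊆ {1,…,M−1}×{1,…,M−1} with x + y = M for all (x,y) ∈ S. Construct a graph H on vertex set {κ₁, κ₂, λ₁, λ₂} ∪ {q₁,…,q_{2M}}, with path edges q_j q_{j+1} for 1 ≤ j < 2M, edges κ₁q₁ and λ₁q_{2M}, and for each (x,y) ∈ S the edges q_{2x}κ₂ and q_{2x+1}λ₂. Then for any pair of vertex-disjoint paths P₁ from κ₁ to κ₂ and P₂ from λ₁ to λ₂ that together cover all vertices of H, there exists (x,y) ∈ S with P₁ having length 2x+1 and P₂ having length 2y+1; conversely, for every (x,y) ∈ S such a covering pair of paths of those lengths exists. -/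

import Mathlib

/-- The base relation of the arc gadget of Lemma 7.14. Vertices: `Sum.inl 0 = κ₁`,
`Sum.inl 1 = κ₂`, `Sum.inl 2 = λ₁`, `Sum.inl 3 = λ₂`, and `Sum.inr j` is the path
vertex `q_{j+1}` (0-indexed). -/
def arcRel (M : ℕ) (S : Set (ℕ × ℕ)) :
    (Fin 4 ⊕ Fin (2 * M)) → (Fin 4 ⊕ Fin (2 * M)) → Prop
  | Sum.inr j, Sum.inr j' => (j : ℕ) + 1 = (j' : ℕ)
  | Sum.inl a, Sum.inr j =>
      (a = 0 ∧ (j : ℕ) = 0) ∨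
      (a = 2 ∧ (j : ℕ) = 2 * M - 1) ∨
      (a = 1 ∧ ∃ x y, (x, y) ∈ S ∧ (j : ℕ) = 2 * x - 1) ∨
      (a = 3 ∧ ∃ x y, (x, y) ∈ S ∧ (j : ℕ) = 2 * x)
  | _, _ => False

/-- The arc gadget graph `H` of Lemma 7.14. -/
def arcGadget (M : ℕ) (S : Set (ℕ × ℕ)) : SimpleGraph (Fin 4 ⊕ Fin (2 * M)) :=
  SimpleGraph.fromRel (arcRel M S)

section
variable (M : ℕ) (S : Set (ℕ × ℕ))

lemma adj_inr {j : Fin (2*M)} {v} (h : (arcGadget M S).Adj (Sum.inr j) v) :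
    (∃ k : Fin (2*M), v = Sum.inr k ∧ ((j:ℕ)+1 = k ∨ (k:ℕ)+1 = j)) ∨
    (v = Sum.inl 0 ∧ (j:ℕ) = 0) ∨ (v = Sum.inl 2 ∧ (j:ℕ) = 2*M-1) ∨
    (v = Sum.inl 1 ∧ ∃ x y, (x,y) ∈ S ∧ (j:ℕ) = 2*x-1) ∨
    (v = Sum.inl 3 ∧ ∃ x y, (x,y) ∈ S ∧ (j:ℕ) = 2*x) := by
  rw [arcGadget, SimpleGraph.fromRel_adj] at h
  obtain ⟨hne, h | h⟩ := h
  · match v, h with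
    | Sum.inr k, h => exact Or.inl ⟨k, rfl, Or.inl h⟩
  · match v, h with
    | Sum.inr k, h => exact Or.inl ⟨k, rfl, Or.inr h⟩
    | Sum.inl a, h =>
      rcases h with ⟨ha, hj⟩ | ⟨ha, hj⟩ | ⟨ha, hj⟩ | ⟨ha, hj⟩ <;> subst ha
      · exact Or.inr (Or.inl ⟨rfl, hj⟩)
      · exact Or.inr (Or.inr (Or.inl ⟨rfl, hj⟩))
      · exact Or.inr (Or.inr (Or.inr (Or.inl ⟨rfl, hj⟩)))
      · exact Or.inr (Or.inr (Or.inr (Or.inr ⟨rfl, hj⟩)))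

lemma adj_inl0 {v} (h : (arcGadget M S).Adj (Sum.inl 0) v) :
    ∃ j : Fin (2*M), v = Sum.inr j ∧ (j:ℕ) = 0 := by
  rw [arcGadget, SimpleGraph.fromRel_adj] at h
  obtain ⟨hne, h | h⟩ := h
  · match v, h with
    | Sum.inr j, h =>
      rcases h with ⟨_, hj⟩ | ⟨ha, _⟩ | ⟨ha, _⟩ | ⟨ha, _⟩
      · exact ⟨j, rfl, hj⟩
      all_goals exact absurd ha (by decide)
  · match v, h with
    | Sum.inl a, h => exact h.elim

lemma adj_inl2 {v} (h : (arcGadget M S).Adj (Sum.inl 2) v) :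
    ∃ j : Fin (2*M), v = Sum.inr j ∧ (j:ℕ) = 2*M-1 := by
  rw [arcGadget, SimpleGraph.fromRel_adj] at h
  obtain ⟨hne, h | h⟩ := h
  · match v, h with
    | Sum.inr j, h =>
      rcases h with ⟨ha, _⟩ | ⟨_, hj⟩ | ⟨ha, _⟩ | ⟨ha, _⟩
      · exact absurd ha (by decide)
      · exact ⟨j, rfl, hj⟩
      all_goals exact absurd ha (by decide)
  · match v, h with
    | Sum.inl a, h => exact h.elim

lemma adj_mk_inr {j k : Fin (2*M)} (h : (j:ℕ)+1 = k) :
    (arcGadget M S).Adj (Sum.inr j) (Sum.inr k) := by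
  rw [arcGadget, SimpleGraph.fromRel_adj]
  exact ⟨by simp [Fin.ext_iff]; omega, Or.inl h⟩

lemma adj_mk_inl0 {j : Fin (2*M)} (h : (j:ℕ) = 0) :
    (arcGadget M S).Adj (Sum.inl 0) (Sum.inr j) := by
  rw [arcGadget, SimpleGraph.fromRel_adj]
  exact ⟨by simp, Or.inl (Or.inl ⟨rfl, h⟩)⟩

lemma adj_mk_inl2 {j : Fin (2*M)} (h : (j:ℕ) = 2*M-1) :
    (arcGadget M S).Adj (Sum.inl 2) (Sum.inr j) := by
  rw [arcGadget, SimpleGraph.fromRel_adj]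
  exact ⟨by simp, Or.inl (Or.inr (Or.inl ⟨rfl, h⟩))⟩

lemma adj_mk_inl1 {j : Fin (2*M)} {x y : ℕ} (hxy : (x,y) ∈ S) (h : (j:ℕ) = 2*x-1) :
    (arcGadget M S).Adj (Sum.inr j) (Sum.inl 1) := by
  rw [arcGadget, SimpleGraph.fromRel_adj]
  exact ⟨by simp, Or.inr (Or.inr (Or.inr (Or.inl ⟨rfl, x, y, hxy, h⟩)))⟩

lemma adj_mk_inl3 {j : Fin (2*M)} {x y : ℕ} (hxy : (x,y) ∈ S) (h : (j:ℕ) = 2*x) :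
    (arcGadget M S).Adj (Sum.inr j) (Sum.inl 3) := by
  rw [arcGadget, SimpleGraph.fromRel_adj]
  exact ⟨by simp, Or.inr (Or.inr (Or.inr (Or.inr ⟨rfl, x, y, hxy, h⟩)))⟩

end

section
variable {M : ℕ} {S : Set (ℕ × ℕ)}
variable (hS : ∀ p ∈ S, p.1 + p.2 = M ∧ 1 ≤ p.1 ∧ p.1 ≤ M - 1 ∧ 1 ≤ p.2 ∧ p.2 ≤ M - 1)

include hS in
lemma lemA : ∀ n : ℕ, ∀ (j : Fin (2*M)) (W : (arcGadget M S).Walk (Sum.inr j) (Sum.inl 1)),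
    W.length = n → W.IsPath →
    Sum.inl 0 ∉ W.support → Sum.inl 2 ∉ W.support → Sum.inl 3 ∉ W.support →
    (∀ j' : Fin (2*M), (j':ℕ) < (j:ℕ) → Sum.inr j' ∉ W.support) →
    ∃ x y, (x,y) ∈ S ∧ (j:ℕ) ≤ 2*x-1 ∧ W.length + (j:ℕ) = 2*x ∧
      (∀ v, v ∈ W.support ↔ v = Sum.inl 1 ∨
        ∃ k : Fin (2*M), v = Sum.inr k ∧ (j:ℕ) ≤ (k:ℕ) ∧ (k:ℕ) ≤ 2*x-1) := by
  intro n
  induction n using Nat.strong_induction_on with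
  | _ n IH =>
    intro j W hlen hp h0 h2 h3 hlt
    cases W with
    | cons h W' =>
      rename_i v
      rw [SimpleGraph.Walk.cons_isPath_iff] at hp
      obtain ⟨hp', hjni⟩ := hp
      rcases adj_inr M S h with ⟨k, rfl, hk | hk⟩ | ⟨rfl, _⟩ | ⟨rfl, _⟩ | ⟨rfl, hx⟩ | ⟨rfl, _⟩
      · -- forward step to k = j+1
        have hlt' : ∀ j' : Fin (2*M), (j':ℕ) < (k:ℕ) → Sum.inr j' ∉ W'.support := by
          intro j' hj' hmem
          rcases Nat.lt_or_ge (j':ℕ) (j:ℕ) with h' | h'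
          · exact hlt j' h' (by simp [hmem])
          · have : j' = j := by apply Fin.ext; omega
            subst this; exact hjni hmem
        have hn : W'.length + 1 = n := by simpa using hlen
        obtain ⟨x, y, hxy, hkx, hlen', hsupp⟩ := IH W'.length (by omega) k W' rfl hp'
          (fun hh => h0 (by simp [hh])) (fun hh => h2 (by simp [hh]))
          (fun hh => h3 (by simp [hh])) hlt'
        have hx1 := (hS _ hxy).2.1
        have hlen2 : (SimpleGraph.Walk.cons h W').length + (j:ℕ) = 2*x := by
          rw [SimpleGraph.Walk.length_cons]; omega
        refine ⟨x, y, hxy, by omega, hlen2, ?_⟩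
        intro v
        simp only [SimpleGraph.Walk.support_cons, List.mem_cons]
        constructor
        · rintro (rfl | hv)
          · exact Or.inr ⟨j, rfl, le_refl _, by omega⟩
          · rcases (hsupp v).1 hv with h | ⟨k', rfl, h1, h2⟩
            · exact Or.inl h
            · exact Or.inr ⟨k', rfl, by omega, h2⟩
        · rintro (rfl | ⟨k', rfl, h1, h2'⟩)
          · exact Or.inr ((hsupp _).2 (Or.inl rfl))
          · rcases Nat.eq_or_lt_of_le h1 with h' | h'
            · have : k' = j := by apply Fin.ext; omega
              subst this; exact Or.inl rfl
            · exact Or.inr ((hsupp _).2 (Or.inr ⟨k', rfl, by omega, h2'⟩))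
      · -- backward step: contradiction
        exact absurd (by simp [SimpleGraph.Walk.start_mem_support] :
          (Sum.inr k : Fin 4 ⊕ Fin (2*M)) ∈ (SimpleGraph.Walk.cons h W').support)
          (hlt k (by omega))
      · exact absurd (by simp [SimpleGraph.Walk.support_cons, SimpleGraph.Walk.start_mem_support]) h0
      · exact absurd (by simp [SimpleGraph.Walk.support_cons, SimpleGraph.Walk.start_mem_support]) h2
      · -- reached κ₂
        obtain ⟨x, y, hxy, hj⟩ := hx
        have hnil : W' = SimpleGraph.Walk.nil := SimpleGraph.Walk.isPath_iff_eq_nil.1 hp'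
        subst hnil
        have hx1 := (hS _ hxy).2.1
        refine ⟨x, y, hxy, by omega, by simp; omega, ?_⟩
        intro v
        simp only [SimpleGraph.Walk.support_cons, SimpleGraph.Walk.support_nil, List.mem_cons,
          List.mem_singleton]
        constructor
        · rintro (rfl | rfl | h)
          · exact Or.inr ⟨j, rfl, le_refl _, by omega⟩
          · exact Or.inl rfl
          · exact absurd h List.not_mem_nil
        · rintro (rfl | ⟨k', rfl, h1, h2'⟩)
          · exact Or.inr (Or.inl rfl)
          · have : k' = j := by apply Fin.ext; omega
            subst this; exact Or.inl rfl
      · exact absurd (by simp [SimpleGraph.Walk.support_cons, SimpleGraph.Walk.start_mem_support]) h3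
end

section
variable {M : ℕ} {S : Set (ℕ × ℕ)}
variable (hS : ∀ p ∈ S, p.1 + p.2 = M ∧ 1 ≤ p.1 ∧ p.1 ≤ M - 1 ∧ 1 ≤ p.2 ∧ p.2 ≤ M - 1)

include hS in
lemma lemB : ∀ n : ℕ, ∀ (j : Fin (2*M)) (W : (arcGadget M S).Walk (Sum.inr j) (Sum.inl 3)),
    W.length = n → W.IsPath →
    Sum.inl 0 ∉ W.support → Sum.inl 1 ∉ W.support → Sum.inl 2 ∉ W.support →
    (∀ j' : Fin (2*M), (j:ℕ) < (j':ℕ) → Sum.inr j' ∉ W.support) →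
    ∃ x y, (x,y) ∈ S ∧ 2*x ≤ (j:ℕ) ∧ W.length + 2*x = (j:ℕ) + 1 ∧
      (∀ v, v ∈ W.support ↔ v = Sum.inl 3 ∨
        ∃ k : Fin (2*M), v = Sum.inr k ∧ 2*x ≤ (k:ℕ) ∧ (k:ℕ) ≤ (j:ℕ)) := by
  intro n
  induction n using Nat.strong_induction_on with
  | _ n IH =>
    intro j W hlen hp h0 h1 h2 hgt
    cases W with
    | cons h W' =>
      rename_i v
      rw [SimpleGraph.Walk.cons_isPath_iff] at hp
      obtain ⟨hp', hjni⟩ := hp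
      rcases adj_inr M S h with ⟨k, rfl, hk | hk⟩ | ⟨rfl, hj0⟩ | ⟨rfl, _⟩ | ⟨rfl, _⟩ | ⟨rfl, hx⟩
      · -- forward step: contradiction (k = j+1 > j)
        exact absurd (by simp [SimpleGraph.Walk.start_mem_support] :
          (Sum.inr k : Fin 4 ⊕ Fin (2*M)) ∈ (SimpleGraph.Walk.cons h W').support)
          (hgt k (by omega))
      · -- backward step to k = j-1
        have hgt' : ∀ j' : Fin (2*M), (k:ℕ) < (j':ℕ) → Sum.inr j' ∉ W'.support := by
          intro j' hj' hmem
          rcases Nat.lt_or_ge (j:ℕ) (j':ℕ) with h' | h'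
          · exact hgt j' h' (by simp [hmem])
          · have : j' = j := by apply Fin.ext; omega
            subst this; exact hjni hmem
        have hn : W'.length + 1 = n := by simpa using hlen
        obtain ⟨x, y, hxy, hkx, hlen', hsupp⟩ := IH W'.length (by omega) k W' rfl hp'
          (fun hh => h0 (by simp [hh])) (fun hh => h1 (by simp [hh]))
          (fun hh => h2 (by simp [hh])) hgt'
        have hx1 := (hS _ hxy).2.1
        have hlen2 : (SimpleGraph.Walk.cons h W').length + 2*x = (j:ℕ) + 1 := by
          rw [SimpleGraph.Walk.length_cons]; omega
        refine ⟨x, y, hxy, by omega, hlen2, ?_⟩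
        intro v
        simp only [SimpleGraph.Walk.support_cons, List.mem_cons]
        constructor
        · rintro (rfl | hv)
          · exact Or.inr ⟨j, rfl, by omega, le_refl _⟩
          · rcases (hsupp v).1 hv with h | ⟨k', rfl, ha, hb⟩
            · exact Or.inl h
            · exact Or.inr ⟨k', rfl, ha, by omega⟩
        · rintro (rfl | ⟨k', rfl, ha, hb⟩)
          · exact Or.inr ((hsupp _).2 (Or.inl rfl))
          · rcases Nat.eq_or_lt_of_le hb with h' | h'
            · have : k' = j := by apply Fin.ext; omega
              subst this; exact Or.inl rfl
            · exact Or.inr ((hsupp _).2 (Or.inr ⟨k', rfl, ha, by omega⟩))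
      · exact absurd (by simp [SimpleGraph.Walk.support_cons, SimpleGraph.Walk.start_mem_support]) h0
      · exact absurd (by simp [SimpleGraph.Walk.support_cons, SimpleGraph.Walk.start_mem_support]) h2
      · exact absurd (by simp [SimpleGraph.Walk.support_cons, SimpleGraph.Walk.start_mem_support]) h1
      · -- reached λ₂
        obtain ⟨x, y, hxy, hj⟩ := hx
        have hnil : W' = SimpleGraph.Walk.nil := SimpleGraph.Walk.isPath_iff_eq_nil.1 hp'
        subst hnil
        refine ⟨x, y, hxy, by omega, by simp; omega, ?_⟩
        intro v
        simp only [SimpleGraph.Walk.support_cons, SimpleGraph.Walk.support_nil, List.mem_cons,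
          List.mem_singleton]
        constructor
        · rintro (rfl | rfl | h)
          · exact Or.inr ⟨j, rfl, by omega, le_refl _⟩
          · exact Or.inl rfl
          · exact absurd h List.not_mem_nil
        · rintro (rfl | ⟨k', rfl, ha, hb⟩)
          · exact Or.inr (Or.inl rfl)
          · have : k' = j := by apply Fin.ext; omega
            subst this; exact Or.inl rfl
end

section
variable {M : ℕ} {S : Set (ℕ × ℕ)}

lemma conU : ∀ (n : ℕ) (j : Fin (2*M)) (x y : ℕ), (x,y) ∈ S → 1 ≤ x →
    (j:ℕ) + n = 2*x - 1 → 2*x ≤ 2*M →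
    ∃ W : (arcGadget M S).Walk (Sum.inr j) (Sum.inl 1), W.IsPath ∧ W.length = n + 1 ∧
      ∀ v, v ∈ W.support ↔ v = Sum.inl 1 ∨
        ∃ k : Fin (2*M), v = Sum.inr k ∧ (j:ℕ) ≤ (k:ℕ) ∧ (k:ℕ) ≤ 2*x-1 := by
  intro n
  induction n with
  | zero =>
    intro j x y hxy hx1 hj hbd
    refine ⟨SimpleGraph.Walk.cons (adj_mk_inl1 M S hxy (by omega)) SimpleGraph.Walk.nil,
      by simp, by simp, ?_⟩
    intro v
    simp only [SimpleGraph.Walk.support_cons, SimpleGraph.Walk.support_nil, List.mem_cons,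
      List.mem_singleton]
    constructor
    · rintro (rfl | rfl | h)
      · exact Or.inr ⟨j, rfl, le_refl _, by omega⟩
      · exact Or.inl rfl
      · exact absurd h List.not_mem_nil
    · rintro (rfl | ⟨k', rfl, ha, hb⟩)
      · exact Or.inr (Or.inl rfl)
      · have : k' = j := by apply Fin.ext; omega
        subst this; exact Or.inl rfl
  | succ n IH =>
    intro j x y hxy hx1 hj hbd
    have hk : (j:ℕ) + 1 < 2*M := by omega
    set k : Fin (2*M) := ⟨(j:ℕ)+1, hk⟩ with hkdef
    obtain ⟨W', hp', hlen', hsupp'⟩ := IH k x y hxy hx1 (by simp [hkdef]; omega) hbd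
    refine ⟨SimpleGraph.Walk.cons (adj_mk_inr M S (by simp [hkdef])) W', ?_, by simp [hlen'], ?_⟩
    · rw [SimpleGraph.Walk.cons_isPath_iff]
      refine ⟨hp', fun hmem => ?_⟩
      rcases (hsupp' _).1 hmem with h | ⟨k', hk', ha, hb⟩
      · exact absurd h (by simp)
      · have : k' = j := by exact Sum.inr.inj hk'.symm ▸ rfl
        rw [Sum.inr.injEq] at hk'
        subst hk'
        simp [hkdef] at ha
    · intro v
      simp only [SimpleGraph.Walk.support_cons, List.mem_cons]
      constructor
      · rintro (rfl | hv)
        · exact Or.inr ⟨j, rfl, le_refl _, by omega⟩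
        · rcases (hsupp' v).1 hv with h | ⟨k', rfl, ha, hb⟩
          · exact Or.inl h
          · exact Or.inr ⟨k', rfl, by simp [hkdef] at ha; omega, hb⟩
      · rintro (rfl | ⟨k', rfl, ha, hb⟩)
        · exact Or.inr ((hsupp' _).2 (Or.inl rfl))
        · rcases Nat.eq_or_lt_of_le ha with h' | h'
          · have : k' = j := by apply Fin.ext; omega
            subst this; exact Or.inl rfl
          · exact Or.inr ((hsupp' _).2 (Or.inr ⟨k', rfl, by simp [hkdef]; omega, hb⟩))
end

section
variable {M : ℕ} {S : Set (ℕ × ℕ)}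

lemma conD : ∀ (n : ℕ) (j : Fin (2*M)) (x y : ℕ), (x,y) ∈ S →
    2*x + n = (j:ℕ) →
    ∃ W : (arcGadget M S).Walk (Sum.inr j) (Sum.inl 3), W.IsPath ∧ W.length = n + 1 ∧
      ∀ v, v ∈ W.support ↔ v = Sum.inl 3 ∨
        ∃ k : Fin (2*M), v = Sum.inr k ∧ 2*x ≤ (k:ℕ) ∧ (k:ℕ) ≤ (j:ℕ) := by
  intro n
  induction n with
  | zero =>
    intro j x y hxy hj
    refine ⟨SimpleGraph.Walk.cons (adj_mk_inl3 M S hxy (by omega)) SimpleGraph.Walk.nil,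
      by simp, by simp, ?_⟩
    intro v
    simp only [SimpleGraph.Walk.support_cons, SimpleGraph.Walk.support_nil, List.mem_cons,
      List.mem_singleton]
    constructor
    · rintro (rfl | rfl | h)
      · exact Or.inr ⟨j, rfl, by omega, le_refl _⟩
      · exact Or.inl rfl
      · exact absurd h List.not_mem_nil
    · rintro (rfl | ⟨k', rfl, ha, hb⟩)
      · exact Or.inr (Or.inl rfl)
      · have : k' = j := by apply Fin.ext; omega
        subst this; exact Or.inl rfl
  | succ n IH =>
    intro j x y hxy hj
    have hk : (j:ℕ) - 1 < 2*M := by omega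
    set k : Fin (2*M) := ⟨(j:ℕ)-1, hk⟩ with hkdef
    obtain ⟨W', hp', hlen', hsupp'⟩ := IH k x y hxy (by simp [hkdef]; omega)
    refine ⟨SimpleGraph.Walk.cons (adj_mk_inr M S (by simp [hkdef]; omega)).symm W',
      ?_, by simp [hlen'], ?_⟩
    · rw [SimpleGraph.Walk.cons_isPath_iff]
      refine ⟨hp', fun hmem => ?_⟩
      rcases (hsupp' _).1 hmem with h | ⟨k', hk', ha, hb⟩
      · exact absurd h (by simp)
      · rw [Sum.inr.injEq] at hk'
        subst hk'
        simp [hkdef] at hb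
        omega
    · intro v
      simp only [SimpleGraph.Walk.support_cons, List.mem_cons]
      constructor
      · rintro (rfl | hv)
        · exact Or.inr ⟨j, rfl, by omega, le_refl _⟩
        · rcases (hsupp' v).1 hv with h | ⟨k', rfl, ha, hb⟩
          · exact Or.inl h
          · exact Or.inr ⟨k', rfl, ha, by simp [hkdef] at hb; omega⟩
      · rintro (rfl | ⟨k', rfl, ha, hb⟩)
        · exact Or.inr ((hsupp' _).2 (Or.inl rfl))
        · rcases Nat.eq_or_lt_of_le hb with h' | h'
          · have : k' = j := by apply Fin.ext; omega
            subst this; exact Or.inl rfl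
          · exact Or.inr ((hsupp' _).2 (Or.inr ⟨k', rfl, ha, by simp [hkdef]; omega⟩))
end

/-- Lemma 7.14, properties (iv) and (v): vertex-disjoint paths `P₁ : κ₁ → κ₂` and
`P₂ : λ₁ → λ₂` covering all vertices of the gadget exist exactly with lengths
`(2x+1, 2y+1)` for `(x,y) ∈ S`. -/
theorem stmt15 (M : ℕ) (hM : 2 ≤ M) (S : Set (ℕ × ℕ))
    (hS : ∀ p ∈ S, p.1 + p.2 = M ∧ 1 ≤ p.1 ∧ p.1 ≤ M - 1 ∧ 1 ≤ p.2 ∧ p.2 ≤ M - 1) :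
    (∀ (P₁ : (arcGadget M S).Walk (Sum.inl 0) (Sum.inl 1))
       (P₂ : (arcGadget M S).Walk (Sum.inl 2) (Sum.inl 3)),
      P₁.IsPath → P₂.IsPath →
      (∀ v, v ∈ P₁.support → v ∉ P₂.support) →
      (∀ v, v ∈ P₁.support ∨ v ∈ P₂.support) →
      ∃ x y, (x, y) ∈ S ∧ P₁.length = 2 * x + 1 ∧ P₂.length = 2 * y + 1) ∧
    (∀ x y, (x, y) ∈ S →
      ∃ (P₁ : (arcGadget M S).Walk (Sum.inl 0) (Sum.inl 1))
        (P₂ : (arcGadget M S).Walk (Sum.inl 2) (Sum.inl 3)),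
        P₁.IsPath ∧ P₂.IsPath ∧
        (∀ v, v ∈ P₁.support → v ∉ P₂.support) ∧
        (∀ v, v ∈ P₁.support ∨ v ∈ P₂.support) ∧
        P₁.length = 2 * x + 1 ∧ P₂.length = 2 * y + 1) := by
  constructor
  · intro P₁ P₂ hp1 hp2 hdisj hcov
    cases P₁ with
    | cons h Q₁ =>
      obtain ⟨j0, rfl, hj0⟩ := adj_inl0 M S h
      rw [SimpleGraph.Walk.cons_isPath_iff] at hp1
      obtain ⟨hq1, h0n⟩ := hp1
      cases P₂ with
      | cons h' Q₂ =>
        obtain ⟨jm, rfl, hjm⟩ := adj_inl2 M S h'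
        rw [SimpleGraph.Walk.cons_isPath_iff] at hp2
        obtain ⟨hq2, h2n⟩ := hp2
        obtain ⟨x, y₁, hxy1, hkx1, hlenQ1, hsupp1⟩ := lemA hS Q₁.length j0 Q₁ rfl hq1 h0n
          (fun hh => hdisj _ (by simp [hh]) (SimpleGraph.Walk.start_mem_support _))
          (fun hh => hdisj _ (by simp [hh]) (SimpleGraph.Walk.end_mem_support _))
          (fun j' hlt' _ => by omega)
        obtain ⟨x', y₂, hxy2, hkx2, hlenQ2, hsupp2⟩ := lemB hS Q₂.length jm Q₂ rfl hq2
          (fun hh => hdisj _ (SimpleGraph.Walk.start_mem_support _) (by simp [hh]))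
          (fun hh => hdisj _ (SimpleGraph.Walk.end_mem_support _) (by simp [hh]))
          h2n
          (fun j' hgt' _ => by have := j'.isLt; omega)
        obtain ⟨hsum1, hx1, hxM1, hy1, hyM1⟩ := hS _ hxy1
        obtain ⟨hsum2, hx2, hxM2, hy2, hyM2⟩ := hS _ hxy2
        -- 2x ≤ 2x'
        have hk1lt : 2*x - 1 < 2*M := by omega
        have hmem1 : Sum.inr (⟨2*x-1, hk1lt⟩ : Fin (2*M)) ∈ Q₁.support :=
          (hsupp1 _).2 (Or.inr ⟨_, rfl, by simp; omega, by simp⟩)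
        have hnin2 : Sum.inr (⟨2*x-1, hk1lt⟩ : Fin (2*M)) ∉ Q₂.support := by
          intro hh
          exact hdisj (Sum.inr (⟨2*x-1, hk1lt⟩ : Fin (2*M))) (by simp [hmem1]) (by simp [hh])
        have hle1 : 2*x ≤ 2*x' := by
          by_contra hcon
          exact hnin2 ((hsupp2 _).2 (Or.inr ⟨_, rfl, by simp; omega, by simp; omega⟩))
        -- 2x' ≤ 2x
        have hk2lt : 2*x < 2*M := by omega
        have hnin1 : Sum.inr (⟨2*x, hk2lt⟩ : Fin (2*M)) ∉ Q₁.support := by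
          intro hh
          rcases (hsupp1 _).1 hh with h'' | ⟨k', hk', _, hb⟩
          · exact absurd h'' (by simp)
          · rw [Sum.inr.injEq] at hk'; subst hk'; simp at hb; omega
        have hmem2 : Sum.inr (⟨2*x, hk2lt⟩ : Fin (2*M)) ∈ Q₂.support := by
          rcases hcov (Sum.inr ⟨2*x, hk2lt⟩) with hh | hh
          · simp only [SimpleGraph.Walk.support_cons, List.mem_cons] at hh
            rcases hh with hh | hh
            · exact absurd hh (by simp)
            · exact absurd hh hnin1
          · simp only [SimpleGraph.Walk.support_cons, List.mem_cons] at hh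
            rcases hh with hh | hh
            · exact absurd hh (by simp)
            · exact hh
        have hle2 : 2*x' ≤ 2*x := by
          rcases (hsupp2 _).1 hmem2 with h'' | ⟨k', hk', ha, _⟩
          · exact absurd h'' (by simp)
          · rw [Sum.inr.injEq] at hk'; subst hk'; simp at ha; omega
        refine ⟨x, y₁, hxy1, ?_, ?_⟩
        · simp only [SimpleGraph.Walk.length_cons]; omega
        · simp only [SimpleGraph.Walk.length_cons]; omega
  · intro x y hxy
    obtain ⟨hsum, hx1, hxM, hy1, hyM⟩ := hS _ hxy
    have h0lt : (0:ℕ) < 2*M := by omega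
    have hmlt : 2*M - 1 < 2*M := by omega
    obtain ⟨W₁, hp1, hlen1, hsupp1⟩ := conU (2*x-1) (⟨0, h0lt⟩ : Fin (2*M)) x y hxy hx1
      (by simp) (by omega)
    obtain ⟨W₂, hp2, hlen2, hsupp2⟩ := conD (2*M-1-2*x) (⟨2*M-1, hmlt⟩ : Fin (2*M)) x y hxy
      (by simp; omega)
    refine ⟨SimpleGraph.Walk.cons (adj_mk_inl0 M S (by simp)) W₁,
      SimpleGraph.Walk.cons (adj_mk_inl2 M S (by simp)) W₂, ?_, ?_, ?_, ?_, ?_, ?_⟩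
    · rw [SimpleGraph.Walk.cons_isPath_iff]
      refine ⟨hp1, fun hh => ?_⟩
      rcases (hsupp1 _).1 hh with h'' | ⟨k', hk', _, _⟩
      · exact absurd h'' (by simp)
      · exact absurd hk' (by simp)
    · rw [SimpleGraph.Walk.cons_isPath_iff]
      refine ⟨hp2, fun hh => ?_⟩
      rcases (hsupp2 _).1 hh with h'' | ⟨k', hk', _, _⟩
      · exact absurd h'' (by simp)
      · exact absurd hk' (by simp)
    · intro v hv hv2
      simp only [SimpleGraph.Walk.support_cons, List.mem_cons] at hv hv2
      rcases hv with rfl | hv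
      · rcases hv2 with hh | hh
        · exact absurd hh (by simp)
        · rcases (hsupp2 _).1 hh with h'' | ⟨k', hk', _, _⟩
          · exact absurd h'' (by simp)
          · exact absurd hk' (by simp)
      · rcases (hsupp1 _).1 hv with rfl | ⟨k', rfl, ha, hb⟩
        · rcases hv2 with hh | hh
          · exact absurd hh (by simp)
          · rcases (hsupp2 _).1 hh with h'' | ⟨k', hk', _, _⟩
            · exact absurd h'' (by simp)
            · exact absurd hk' (by simp)
        · rcases hv2 with hh | hh
          · exact absurd hh (by simp)
          · rcases (hsupp2 _).1 hh with h'' | ⟨k'', hk'', ha2, _⟩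
            · exact absurd h'' (by simp)
            · rw [Sum.inr.injEq] at hk''; subst hk''
              omega
    · intro v
      simp only [SimpleGraph.Walk.support_cons, List.mem_cons]
      match v with
      | Sum.inl 0 => exact Or.inl (Or.inl rfl)
      | Sum.inl 1 => exact Or.inl (Or.inr ((hsupp1 _).2 (Or.inl rfl)))
      | Sum.inl 2 => exact Or.inr (Or.inl rfl)
      | Sum.inl 3 => exact Or.inr (Or.inr ((hsupp2 _).2 (Or.inl rfl)))
      | Sum.inr k =>
        rcases Nat.lt_or_ge (k:ℕ) (2*x) with hk | hk
        · exact Or.inl (Or.inr ((hsupp1 _).2 (Or.inr ⟨k, rfl, by simp, by omega⟩)))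
        · exact Or.inr (Or.inr ((hsupp2 _).2 (Or.inr ⟨k, rfl, hk, by simp; have := k.isLt; omega⟩)))
    · simp only [SimpleGraph.Walk.length_cons]; omega
    · simp only [SimpleGraph.Walk.length_cons]; omega
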